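/- For every permutation σ of {0,1,2} there exist A ∈ SL(4,ℂ) and a nonzero c ∈ ℂ with F∘A = c·F such that A·eⱼ is a nonzero scalar multiple of e_{σ(j)} for j = 0,1,2 and A·e₃ is a nonzero scalar multiple of e₃. (This is the surjectivity of the homomorphism Stab(S_{3A₂}) → S₃ in the exact sequence 1 → D' → Stab(S_{3A₂}) → S₃ → 1.) -/

import Mathlib

open MvPolynomial
set_option maxHeartbeats 1000000

/-- The defining cubic form of the 3A₂ cubic surface: F = x₀x₁x₂ + x₃³. -/
noncomputable def F3A2 : MvPolynomial (Fin 4) ℂ :=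
  X 0 * X 1 * X 2 + X 3 ^ 3

/-- The substitution action: (P∘A)(x) = P(A·x), i.e. xⱼ ↦ Σₖ Aⱼₖ·xₖ. -/
noncomputable def actM (A : Matrix (Fin 4) (Fin 4) ℂ) (P : MvPolynomial (Fin 4) ℂ) :
    MvPolynomial (Fin 4) ℂ :=
  MvPolynomial.aeval (fun j => ∑ k : Fin 4, MvPolynomial.C (A j k) * MvPolynomial.X k) P

/-- Standard basis vectors of ℂ⁴. -/
noncomputable def stdBasis (i : Fin 4) : Fin 4 → ℂ := Pi.single i 1

/-- A primitive 8th root of unity. -/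
noncomputable def z8 : ℂ := Complex.exp (Real.pi * Complex.I / 4)

lemma v3fin : ((3 : Fin 4) : ℕ) = 3 := rfl

lemma z8_ne : z8 ≠ 0 := Complex.exp_ne_zero _

lemma z8_pow4 : z8 ^ 4 = -1 := by
  rw [z8, ← Complex.exp_nat_mul]
  rw [show (4:ℕ) * (↑Real.pi * Complex.I / 4) = ↑Real.pi * Complex.I by push_cast; ring,
    Complex.exp_pi_mul_I]

/-- Packaging lemma: given a matrix with the required properties, conclude the goal. -/
lemma pack (σ : Equiv.Perm (Fin 3)) (M : Matrix (Fin 4) (Fin 4) ℂ) (hdet : M.det = 1)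
    (c : ℂ) (hc : c ≠ 0) (hact : actM M F3A2 = c • F3A2)
    (μ : Fin 4 → ℂ) (hμ : ∀ j, μ j ≠ 0)
    (hcol : ∀ j : Fin 3, M.mulVec (stdBasis (Fin.castSucc j)) =
      μ (Fin.castSucc j) • stdBasis (Fin.castSucc (σ j)))
    (h3 : M.mulVec (stdBasis 3) = μ 3 • stdBasis 3) :
    ∃ A : Matrix.SpecialLinearGroup (Fin 4) ℂ, ∃ c : ℂ, c ≠ 0 ∧
      actM (A : Matrix (Fin 4) (Fin 4) ℂ) F3A2 = c • F3A2 ∧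
      (∀ j : Fin 3, ∃ μ : ℂ, μ ≠ 0 ∧
        (A : Matrix (Fin 4) (Fin 4) ℂ).mulVec (stdBasis (Fin.castSucc j)) =
          μ • stdBasis (Fin.castSucc (σ j))) ∧
      (∃ μ : ℂ, μ ≠ 0 ∧
        (A : Matrix (Fin 4) (Fin 4) ℂ).mulVec (stdBasis 3) = μ • stdBasis 3) :=
  ⟨⟨M, hdet⟩, c, hc, hact, fun j => ⟨μ (Fin.castSucc j), hμ _, hcol j⟩, μ 3, hμ 3, h3⟩

/-- Surjectivity of Stab(S_{3A₂}) → S₃: for every permutation σ of {0,1,2} there is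
A ∈ SL(4,ℂ) with F∘A = c·F (c ≠ 0) sending each eⱼ (j < 3) to a nonzero multiple of
e_{σ(j)} and e₃ to a nonzero multiple of e₃. -/
theorem SL_stabilizer_surjects_onto_S3 (σ : Equiv.Perm (Fin 3)) :
    ∃ A : Matrix.SpecialLinearGroup (Fin 4) ℂ, ∃ c : ℂ, c ≠ 0 ∧
      actM (A : Matrix (Fin 4) (Fin 4) ℂ) F3A2 = c • F3A2 ∧
      (∀ j : Fin 3, ∃ μ : ℂ, μ ≠ 0 ∧
        (A : Matrix (Fin 4) (Fin 4) ℂ).mulVec (stdBasis (Fin.castSucc j)) =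
          μ • stdBasis (Fin.castSucc (σ j))) ∧
      (∃ μ : ℂ, μ ≠ 0 ∧
        (A : Matrix (Fin 4) (Fin 4) ℂ).mulVec (stdBasis 3) = μ • stdBasis 3) := by
  have hz3 : z8 ^ 3 ≠ 0 := pow_ne_zero _ z8_ne
  have hz34 : -(z8 ^ 3 * z8) = 1 := by
    rw [show z8 ^ 3 * z8 = z8 ^ 4 by ring, z8_pow4]; ring
  have hcases : σ = 1 ∨ σ = Equiv.swap 0 1 ∨ σ = Equiv.swap 0 2 ∨ σ = Equiv.swap 1 2 ∨
      σ = Equiv.swap 0 1 * Equiv.swap 1 2 ∨ σ = Equiv.swap 1 2 * Equiv.swap 0 1 := by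
    revert σ; decide
  rcases hcases with h | h | h | h | h | h <;> subst h
  · refine pack _ !![(1:ℂ),0,0,0; 0,1,0,0; 0,0,1,0; 0,0,0,1] ?_ 1 one_ne_zero ?_
      (fun _ => 1) (fun _ => one_ne_zero) ?_ ?_
    · simp [Matrix.det_succ_row_zero, Fin.sum_univ_succ, Fin.succAbove]
    · simp [actM, F3A2, Fin.sum_univ_four, smul_eq_C_mul, Matrix.vecHead, Matrix.vecTail]
    · intro j; fin_cases j <;> · funext i; fin_cases i <;>
        simp [stdBasis, Matrix.mulVec, dotProduct, Fin.sum_univ_four, Pi.single_apply, Equiv.swap_apply_def, Fin.castSucc, Fin.castAdd, Fin.castLE, Fin.ext_iff, v3fin, -Fin.val_eq_zero_iff]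
    · funext i; fin_cases i <;>
        simp [stdBasis, Matrix.mulVec, dotProduct, Fin.sum_univ_four, Pi.single_apply, Equiv.swap_apply_def, Fin.castSucc, Fin.castAdd, Fin.castLE, Fin.ext_iff, v3fin]
  · refine pack _ !![(0:ℂ),1,0,0; z8^3,0,0,0; 0,0,1,0; 0,0,0,z8] ?_ (z8^3) hz3 ?_
      (fun j => if j = 0 then z8^3 else if j = 3 then z8 else 1) ?_ ?_ ?_
    · simp [Matrix.det_succ_row_zero, Fin.sum_univ_succ, Fin.succAbove]
      exact hz34
    · simp [actM, F3A2, Fin.sum_univ_four, smul_eq_C_mul, Matrix.vecHead, Matrix.vecTail]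
      ring
    · intro j; fin_cases j <;> simp [z8_ne, hz3]
    · intro j; fin_cases j <;> · funext i; fin_cases i <;>
        simp [stdBasis, Matrix.mulVec, dotProduct, Fin.sum_univ_four, Pi.single_apply, Equiv.swap_apply_def, Fin.castSucc, Fin.castAdd, Fin.castLE, Fin.ext_iff, v3fin, -Fin.val_eq_zero_iff]
    · funext i; fin_cases i <;>
        simp [stdBasis, Matrix.mulVec, dotProduct, Fin.sum_univ_four, Pi.single_apply, Equiv.swap_apply_def, Fin.castSucc, Fin.castAdd, Fin.castLE, Fin.ext_iff, v3fin]
  · refine pack _ !![(0:ℂ),0,1,0; 0,1,0,0; z8^3,0,0,0; 0,0,0,z8] ?_ (z8^3) hz3 ?_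
      (fun j => if j = 0 then z8^3 else if j = 3 then z8 else 1) ?_ ?_ ?_
    · simp [Matrix.det_succ_row_zero, Fin.sum_univ_succ, Fin.succAbove]
      exact hz34
    · simp [actM, F3A2, Fin.sum_univ_four, smul_eq_C_mul, Matrix.vecHead, Matrix.vecTail]
      ring
    · intro j; fin_cases j <;> simp [z8_ne, hz3]
    · intro j; fin_cases j <;> · funext i; fin_cases i <;>
        simp [stdBasis, Matrix.mulVec, dotProduct, Fin.sum_univ_four, Pi.single_apply, Equiv.swap_apply_def, Fin.castSucc, Fin.castAdd, Fin.castLE, Fin.ext_iff, v3fin, -Fin.val_eq_zero_iff]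
    · funext i; fin_cases i <;>
        simp [stdBasis, Matrix.mulVec, dotProduct, Fin.sum_univ_four, Pi.single_apply, Equiv.swap_apply_def, Fin.castSucc, Fin.castAdd, Fin.castLE, Fin.ext_iff, v3fin]
  · refine pack _ !![z8^3,0,0,0; (0:ℂ),0,1,0; 0,1,0,0; 0,0,0,z8] ?_ (z8^3) hz3 ?_
      (fun j => if j = 0 then z8^3 else if j = 3 then z8 else 1) ?_ ?_ ?_
    · simp [Matrix.det_succ_row_zero, Fin.sum_univ_succ, Fin.succAbove]
      exact hz34
    · simp [actM, F3A2, Fin.sum_univ_four, smul_eq_C_mul, Matrix.vecHead, Matrix.vecTail]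
      ring
    · intro j; fin_cases j <;> simp [z8_ne, hz3]
    · intro j; fin_cases j <;> · funext i; fin_cases i <;>
        simp [stdBasis, Matrix.mulVec, dotProduct, Fin.sum_univ_four, Pi.single_apply, Equiv.swap_apply_def, Fin.castSucc, Fin.castAdd, Fin.castLE, Fin.ext_iff, v3fin, -Fin.val_eq_zero_iff]
    · funext i; fin_cases i <;>
        simp [stdBasis, Matrix.mulVec, dotProduct, Fin.sum_univ_four, Pi.single_apply, Equiv.swap_apply_def, Fin.castSucc, Fin.castAdd, Fin.castLE, Fin.ext_iff, v3fin]
  · refine pack _ !![(0:ℂ),0,1,0; 1,0,0,0; 0,1,0,0; 0,0,0,1] ?_ 1 one_ne_zero ?_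
      (fun _ => 1) (fun _ => one_ne_zero) ?_ ?_
    · simp [Matrix.det_succ_row_zero, Fin.sum_univ_succ, Fin.succAbove]
    · simp [actM, F3A2, Fin.sum_univ_four, smul_eq_C_mul, Matrix.vecHead, Matrix.vecTail]
      ring
    · intro j; fin_cases j <;> · funext i; fin_cases i <;>
        simp [stdBasis, Matrix.mulVec, dotProduct, Fin.sum_univ_four, Pi.single_apply, Equiv.swap_apply_def, Fin.castSucc, Fin.castAdd, Fin.castLE, Fin.ext_iff, v3fin, -Fin.val_eq_zero_iff]
    · funext i; fin_cases i <;>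
        simp [stdBasis, Matrix.mulVec, dotProduct, Fin.sum_univ_four, Pi.single_apply, Equiv.swap_apply_def, Fin.castSucc, Fin.castAdd, Fin.castLE, Fin.ext_iff, v3fin]
  · refine pack _ !![(0:ℂ),1,0,0; 0,0,1,0; 1,0,0,0; 0,0,0,1] ?_ 1 one_ne_zero ?_
      (fun _ => 1) (fun _ => one_ne_zero) ?_ ?_
    · simp [Matrix.det_succ_row_zero, Fin.sum_univ_succ, Fin.succAbove]
    · simp [actM, F3A2, Fin.sum_univ_four, smul_eq_C_mul, Matrix.vecHead, Matrix.vecTail]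
      ring
    · intro j; fin_cases j <;> · funext i; fin_cases i <;>
        simp [stdBasis, Matrix.mulVec, dotProduct, Fin.sum_univ_four, Pi.single_apply, Equiv.swap_apply_def, Fin.castSucc, Fin.castAdd, Fin.castLE, Fin.ext_iff, v3fin, -Fin.val_eq_zero_iff]
    · funext i; fin_cases i <;>
        simp [stdBasis, Matrix.mulVec, dotProduct, Fin.sum_univ_four, Pi.single_apply, Equiv.swap_apply_def, Fin.castSucc, Fin.castAdd, Fin.castLE, Fin.ext_iff, v3fin]
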